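/- Let H be a real Hilbert space and T : H → H nonexpansive. Suppose a sequence {y_k} in H is bounded, y_k ⇀ y (weak convergence), and ‖T(y_k) − y_k‖ → 0. Then y ∈ Fix(T). -/

import Mathlib

open Filter Topology
open scoped RealInnerProductSpace

theorem stmt17 {H : Type*} [NormedAddCommGroup H] [InnerProductSpace ℝ H] [CompleteSpace H]
    (T : H → H) (hT : ∀ x z : H, ‖T x - T z‖ ≤ ‖x - z‖)
    (y : ℕ → H) (ylim : H)
    (hbdd : ∃ M : ℝ, ∀ k, ‖y k‖ ≤ M)
    (hweak : ∀ u : H, Tendsto (fun k => ⟪y k, u⟫) atTop (𝓝 ⟪ylim, u⟫))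
    (hres : Tendsto (fun k => ‖T (y k) - y k‖) atTop (𝓝 0)) :
    T ylim = ylim := by
  obtain ⟨M, hM⟩ := hbdd
  have ha : Tendsto (fun k => ‖y k - T ylim‖^2 - ‖y k - ylim‖^2) atTop
      (𝓝 (‖ylim - T ylim‖^2)) := by
    have h1 : ∀ k, ‖y k - T ylim‖^2 - ‖y k - ylim‖^2
        = -2*⟪y k, T ylim⟫ + ‖T ylim‖^2 + 2*⟪y k, ylim⟫ - ‖ylim‖^2 := by
      intro k
      rw [@norm_sub_sq_real, @norm_sub_sq_real]; ring
    have h2 : ‖ylim - T ylim‖^2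
        = -2*⟪ylim, T ylim⟫ + ‖T ylim‖^2 + 2*⟪ylim, ylim⟫ - ‖ylim‖^2 := by
      rw [@norm_sub_sq_real, real_inner_self_eq_norm_sq]; ring
    simp_rw [h1]
    rw [h2]
    exact ((((hweak (T ylim)).const_mul (-2)).add tendsto_const_nhds).add
      ((hweak ylim).const_mul 2)).sub tendsto_const_nhds
  have hb : Tendsto
      (fun k => ‖T (y k) - y k‖^2 + 2 * ‖T (y k) - y k‖ * (M + ‖ylim‖)) atTop (𝓝 0) := by
    have := (hres.pow 2).add ((hres.const_mul 2).mul_const (M + ‖ylim‖))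
    simpa using this
  have hle : ∀ k, ‖y k - T ylim‖^2 - ‖y k - ylim‖^2
      ≤ ‖T (y k) - y k‖^2 + 2 * ‖T (y k) - y k‖ * (M + ‖ylim‖) := by
    intro k
    have h3 : ‖y k - T ylim‖ ≤ ‖T (y k) - y k‖ + ‖y k - ylim‖ := by
      calc ‖y k - T ylim‖ = ‖(y k - T (y k)) + (T (y k) - T ylim)‖ := by abel_nf
        _ ≤ ‖y k - T (y k)‖ + ‖T (y k) - T ylim‖ := norm_add_le _ _
        _ ≤ ‖T (y k) - y k‖ + ‖y k - ylim‖ := by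
            rw [norm_sub_rev (y k)]; exact add_le_add le_rfl (hT _ _)
    have h4 : ‖y k - ylim‖ ≤ M + ‖ylim‖ := by
      calc ‖y k - ylim‖ ≤ ‖y k‖ + ‖ylim‖ := norm_sub_le _ _
        _ ≤ M + ‖ylim‖ := by linarith [hM k]
    have h5 : (0:ℝ) ≤ ‖T (y k) - y k‖ := norm_nonneg _
    have h6 : (0:ℝ) ≤ ‖y k - T ylim‖ := norm_nonneg _
    have h7 : (0:ℝ) ≤ ‖y k - ylim‖ := norm_nonneg _
    nlinarith [sq_nonneg (‖T (y k) - y k‖ + ‖y k - ylim‖)]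
  have hc : ‖ylim - T ylim‖^2 ≤ 0 := le_of_tendsto_of_tendsto' ha hb hle
  have : ‖ylim - T ylim‖ = 0 := by nlinarith [norm_nonneg (ylim - T ylim)]
  have := norm_eq_zero.mp this
  have := sub_eq_zero.mp this
  exact this.symm
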